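/- Let n ≥ 1 and let γ ∈ ℂ[x_1,…,x_n] be an irreducible polynomial. If f ∈ ℂ[x_1,…,x_n] satisfies f(x) ≠ 0 for every x ∈ ℂⁿ with γ(x) ≠ 0, then there exist c ∈ ℂ, c ≠ 0, and a natural number r such that f = c·γ^r. -/

import Mathlib

open MvPolynomial

/-- Units of a multivariate polynomial ring over an integral domain are constants. -/
lemma aux_isUnit_eq_C {R : Type*} [CommRing R] [IsDomain R] :
    ∀ (n : ℕ) (u : MvPolynomial (Fin n) R), IsUnit u → ∃ c : R, u = C c := by
  intro n
  induction n with
  | zero => intro u _; exact ⟨coeff 0 u, MvPolynomial.eq_C_of_isEmpty u⟩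
  | succ n ih =>
    intro u hu
    have hu' : IsUnit (MvPolynomial.finSuccEquiv R n u) := hu.map _
    obtain ⟨r, hr, hru⟩ := Polynomial.isUnit_iff.mp hu'
    obtain ⟨c, hc⟩ := ih r hr
    refine ⟨c, ?_⟩
    have : (MvPolynomial.finSuccEquiv R n).symm (Polynomial.C r) = u := by
      rw [hru]; exact (MvPolynomial.finSuccEquiv R n).symm_apply_apply u
    rw [← this, hc]
    have := congrArg (fun φ => φ c) (MvPolynomial.finSuccEquiv_comp_C_eq_C (R := R) n)
    simpa using this

/-- If `γ ∈ ℂ[x₁,…,xₙ]` is irreducible and `f` is a polynomial that is nonvanishing at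
every point where `γ` is nonvanishing, then `f = c·γ^r` for some `c ≠ 0` and `r ∈ ℕ`. -/
theorem nonvanishing_off_irreducible_hypersurface
    (n : ℕ) (hn : 1 ≤ n)
    (γ f : MvPolynomial (Fin n) ℂ)
    (hγ : Irreducible γ)
    (hf : ∀ x : Fin n → ℂ, eval x γ ≠ 0 → eval x f ≠ 0) :
    ∃ (c : ℂ) (r : ℕ), c ≠ 0 ∧ f = C c * γ ^ r := by
  -- γ belongs to the radical of (f) by the Nullstellensatz
  have hmem : γ ∈ (Ideal.span {f} : Ideal (MvPolynomial (Fin n) ℂ)).radical := by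
    rw [← MvPolynomial.vanishingIdeal_zeroLocus_eq_radical (K := ℂ)]
    rw [MvPolynomial.mem_vanishingIdeal_iff]
    intro x hx
    rw [MvPolynomial.mem_zeroLocus_iff] at hx
    have hfx : eval x f = 0 := hx f (Ideal.subset_span rfl)
    by_contra hγx
    exact hf x hγx hfx
  obtain ⟨m, hm⟩ := hmem
  have hdvd : f ∣ γ ^ m := (Ideal.mem_span_singleton).mp hm
  have hprime : Prime γ := hγ.prime
  obtain ⟨r, _, hassoc⟩ := (dvd_prime_pow hprime m).mp hdvd
  obtain ⟨u, hu⟩ := hassoc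
  obtain ⟨c, hc⟩ := aux_isUnit_eq_C n (↑u⁻¹ : MvPolynomial (Fin n) ℂ) u⁻¹.isUnit
  refine ⟨c, r, ?_, ?_⟩
  · intro h
    have : (↑u⁻¹ : MvPolynomial (Fin n) ℂ) = 0 := by rw [hc, h, map_zero]
    exact u⁻¹.ne_zero this
  · have : f = γ ^ r * ↑u⁻¹ := by
      have := congrArg (· * (↑u⁻¹ : MvPolynomial (Fin n) ℂ)) hu
      simpa [mul_assoc] using this
    rw [this, hc, mul_comm]
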